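/- For every complex a ∉ [0,1], the integral ∫_0^1 log(u)/(u - a) du equals Li₂(1/a), where Li₂ is the analytic continuation of the dilogarithm to ℂ \ [1,∞). -/

import Mathlib

/-- The dilogarithm on `ℂ \ [1,∞)`, via `Li₂(z) = -∫₀^z log(1-u)/u du`
parametrized along the straight segment from `0` to `z`. -/
noncomputable def dilogC (z : ℂ) : ℂ := -∫ t in (0:ℝ)..1, Complex.log (1 - z * t) / t

open MeasureTheory intervalIntegral Set Filter Topology

/-- `Real.log` is interval integrable on `[0,1]`. -/
lemma intervalIntegrable_log01 : IntervalIntegrable Real.log volume 0 1 := by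
  have hg : IntervalIntegrable (fun x : ℝ => 2 * x ^ (-(1/2) : ℝ)) volume 0 1 :=
    (intervalIntegral.intervalIntegrable_rpow' (by norm_num)).const_mul 2
  refine hg.mono_fun' Real.measurable_log.aestronglyMeasurable ?_
  filter_upwards [ae_restrict_mem measurableSet_uIoc] with x hx
  rw [Set.uIoc_of_le (by norm_num : (0:ℝ) ≤ 1)] at hx
  obtain ⟨hx0, hx1⟩ := hx
  have hlog : Real.log x ≤ 0 := Real.log_nonpos (le_of_lt hx0) hx1
  have h1 : -Real.log x = 2 * Real.log (x ^ (-(1/2) : ℝ)) := by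
    rw [Real.log_rpow hx0]; ring
  have h2 : Real.log (x ^ (-(1/2) : ℝ)) ≤ x ^ (-(1/2) : ℝ) := by
    have := Real.log_le_sub_one_of_pos (Real.rpow_pos_of_pos hx0 (-(1/2)))
    linarith
  simp only [Real.norm_eq_abs, abs_of_nonpos hlog]
  calc -Real.log x = 2 * Real.log (x ^ (-(1/2) : ℝ)) := h1
    _ ≤ 2 * x ^ (-(1/2) : ℝ) := by linarith

theorem integral_log_div_sub_complex (a : ℂ) (ha : ∀ t : ℝ, t ∈ Set.Icc (0:ℝ) 1 → a ≠ t) :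
    ∫ u in (0:ℝ)..1, (Real.log u : ℂ) / (u - a) = dilogC (1 / a) := by
  have ha0 : a ≠ 0 := by
    have := ha 0 ⟨le_refl _, zero_le_one⟩; simpa using this
  have hne : ∀ u : ℝ, u ∈ Icc (0:ℝ) 1 → (u : ℂ) ≠ a := fun u hu h => ha u hu h.symm
  -- the slit plane condition
  have hslit : ∀ u : ℝ, u ∈ Icc (0:ℝ) 1 → (1 - (u:ℂ)/a) ∈ Complex.slitPlane := by
    intro u hu
    by_contra h
    rw [Complex.mem_slitPlane_iff] at h
    push_neg at h
    obtain ⟨hre, him⟩ := h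
    set s : ℂ := 1 - (u:ℂ)/a with hs
    have hu0 : u ≠ 0 := by
      intro h0
      rw [h0] at hs
      simp [hs] at hre
      norm_num at hre
    have hval : (u:ℂ)/a = ((1 - s.re : ℝ) : ℂ) := by
      have : (u:ℂ)/a = 1 - s := by rw [hs]; ring
      rw [this]
      apply Complex.ext <;> simp [him]
    have hr1 : (1:ℝ) ≤ 1 - s.re := by linarith
    have hrne : ((1 - s.re : ℝ) : ℂ) ≠ 0 :=
      Complex.ofReal_ne_zero.mpr (by linarith)
    have hval' : (u:ℂ) = ((1 - s.re : ℝ) : ℂ) * a := by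
      rw [div_eq_iff ha0] at hval
      exact hval
    have haeq : a = ((u / (1 - s.re) : ℝ) : ℂ) := by
      rw [Complex.ofReal_div, eq_div_iff hrne]
      rw [hval']; ring
    have hupos : 0 < u := lt_of_le_of_ne hu.1 (Ne.symm hu0)
    refine ha (u / (1 - s.re)) ⟨by positivity, ?_⟩ haeq
    exact le_trans (div_le_self hupos.le hr1) hu.2
  -- abbreviations
  set L : ℝ → ℂ := fun u => ((Real.log u : ℝ) : ℂ) with hL
  set M : ℝ → ℂ := fun u => Complex.log (1 - (u:ℂ)/a) with hMdef
  set f : ℝ → ℂ := fun u => ((Real.log u : ℝ) : ℂ) / ((u:ℂ) - a) with hf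
  set g : ℝ → ℂ := fun u => Complex.log (1 - (u:ℂ)/a) / (u:ℂ) with hg
  -- derivative of M
  have hM : ∀ u : ℝ, u ∈ Icc (0:ℝ) 1 → HasDerivAt M (((u:ℂ) - a)⁻¹) u := by
    intro u hu
    have hsub : (u:ℂ) - a ≠ 0 := sub_ne_zero.2 (hne u hu)
    have h3 : (1:ℂ) - (u:ℂ)/a ≠ 0 := by
      rw [sub_ne_zero]
      intro h
      apply hne u hu
      field_simp at h
      exact h.symm
    have hd : HasDerivAt (fun z : ℂ => Complex.log (1 - z/a))
        (-(1/a) / (1 - ((u:ℝ):ℂ)/a)) ((u:ℝ):ℂ) :=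
      (((hasDerivAt_id (((u:ℝ)):ℂ)).div_const a).const_sub 1).clog (hslit u hu)
    have := hd.comp_ofReal
    convert this using 1
    rw [eq_div_iff h3]
    field_simp
    ring
  -- derivative of L
  have hLd : ∀ u : ℝ, 0 < u → HasDerivAt L (((u:ℂ))⁻¹) u := by
    intro u hu
    have := (Real.hasDerivAt_log hu.ne').ofReal_comp
    convert this using 1
    push_cast
    ring
  -- M is continuous on [0,1]
  have hMcont : ContinuousOn M (Icc (0:ℝ) 1) := fun u hu =>
    ((hM u hu).continuousAt).continuousWithinAt
  -- integrability of f on [0,1]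
  have hf_int : IntervalIntegrable f volume 0 1 := by
    have hlogC : IntervalIntegrable (fun u : ℝ => ((Real.log u : ℝ) : ℂ)) volume 0 1 := by
      refine intervalIntegrable_log01.mono_fun ?_ ?_
      · exact (Complex.measurable_ofReal.comp Real.measurable_log).aestronglyMeasurable
      · filter_upwards with x; simp
    have hcont : ContinuousOn (fun u : ℝ => ((u:ℂ) - a)⁻¹) (uIcc (0:ℝ) 1) := by
      rw [Set.uIcc_of_le (by norm_num : (0:ℝ) ≤ 1)]
      refine ((Complex.continuous_ofReal.continuousOn.sub continuousOn_const).inv₀ ?_)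
      intro x hx; exact sub_ne_zero.2 (hne x hx)
    have := hlogC.mul_continuousOn hcont
    refine this.congr ?_
    intro x _
    simp [hf, div_eq_mul_inv]
  -- the patched function G extending g continuously to 0
  set G : ℝ → ℂ := fun u => if u = 0 then -a⁻¹ else Complex.log (1 - (u:ℂ)/a) / (u:ℂ) with hG
  have hM0 : M 0 = 0 := by simp [hMdef]
  have hslope : ∀ u : ℝ, u ≠ 0 → slope M 0 u = M u / (u:ℂ) := by
    intro u hu
    have h0 : slope M 0 u = (u - 0)⁻¹ • (M u - M 0) := rfl
    rw [h0, hM0, sub_zero, sub_zero, Complex.real_smul, div_eq_mul_inv]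
    push_cast
    ring
  have hslope_tendsto : Tendsto (slope M 0) (𝓝[≠] (0:ℝ)) (𝓝 (-a⁻¹)) := by
    have := (hasDerivAt_iff_tendsto_slope).1 (hM 0 ⟨le_refl _, zero_le_one⟩)
    convert this using 2
    simp [inv_neg]
  have hGcont : ContinuousOn G (Icc (0:ℝ) 1) := by
    intro u hu
    rcases eq_or_ne u 0 with rfl | hu0
    · rw [← continuousWithinAt_diff_self]
      have hsub : Icc (0:ℝ) 1 \ {0} ⊆ {x : ℝ | x ≠ 0} := fun x hx => hx.2
      have htd : Tendsto G (𝓝[Icc (0:ℝ) 1 \ {0}] 0) (𝓝 (-a⁻¹)) := by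
        refine (hslope_tendsto.mono_left (nhdsWithin_mono _ hsub)).congr' ?_
        filter_upwards [eventually_mem_nhdsWithin] with x hx
        have hx0 : x ≠ 0 := hx.2
        rw [hslope x hx0]
        simp [hG, hx0, hMdef]
      have : G 0 = -a⁻¹ := by simp [hG]
      rw [ContinuousWithinAt, this]
      exact htd
    · have hgc : ContinuousAt g u := by
        have h1 : ContinuousAt (fun x : ℝ => Complex.log (1 - (x:ℂ)/a)) u :=
          ContinuousAt.clog
            (((Complex.continuous_ofReal.continuousAt).div_const a).const_sub 1)
            (hslit u hu)
        have h2 : ContinuousAt (fun x : ℝ => ((x:ℂ))⁻¹) u := by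
          refine (Complex.continuous_ofReal.continuousAt).inv₀ ?_
          exact_mod_cast hu0
        have := h1.mul h2
        refine this.congr ?_
        filter_upwards with x
        simp [hg, div_eq_mul_inv]
      have : ContinuousAt G u := by
        refine hgc.congr ?_
        filter_upwards [eventually_ne_nhds hu0] with x hx
        simp [hG, hg, hx]
      exact this.continuousWithinAt
  have hG_int : IntegrableOn G (uIcc (0:ℝ) 1) volume := by
    rw [Set.uIcc_of_le (by norm_num : (0:ℝ) ≤ 1)]
    exact hGcont.integrableOn_Icc
  -- the filter
  have hIooIcc : Ioo (0:ℝ) 1 ⊆ Icc 0 1 := Ioo_subset_Icc_self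
  haveI hne_bot : (𝓝[Ioo (0:ℝ) 1] 0).NeBot := by
    refine mem_closure_iff_nhdsWithin_neBot.1 ?_
    rw [closure_Ioo (by norm_num : (0:ℝ) ≠ 1)]
    exact ⟨le_refl _, zero_le_one⟩
  -- key identity for ε ∈ (0,1)
  have key : ∀ ε : ℝ, ε ∈ Ioo (0:ℝ) 1 →
      ∫ x in ε..1, f x = -(L ε * M ε) - ∫ x in ε..1, G x := by
    intro ε hε
    have hεIcc : Icc ε 1 ⊆ Icc (0:ℝ) 1 := Icc_subset_Icc (le_of_lt hε.1) le_rfl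
    have huIcc : uIcc ε 1 = Icc ε 1 := Set.uIcc_of_le (le_of_lt hε.2)
    have hu' : IntervalIntegrable (fun x : ℝ => ((x:ℂ))⁻¹) volume ε 1 := by
      apply ContinuousOn.intervalIntegrable
      rw [huIcc]
      refine (Complex.continuous_ofReal.continuousOn).inv₀ ?_
      intro x hx
      exact_mod_cast (lt_of_lt_of_le hε.1 hx.1).ne'
    have hv' : IntervalIntegrable (fun x : ℝ => ((x:ℂ) - a)⁻¹) volume ε 1 := by
      apply ContinuousOn.intervalIntegrable
      rw [huIcc]
      refine ((Complex.continuous_ofReal.continuousOn.sub continuousOn_const).inv₀ ?_)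
      intro x hx
      exact sub_ne_zero.2 (hne x (hεIcc hx))
    have hibp := intervalIntegral.integral_deriv_mul_eq_sub
      (u := L) (v := M) (u' := fun x => ((x:ℂ))⁻¹) (v' := fun x => ((x:ℂ) - a)⁻¹)
      (a := ε) (b := 1)
      (fun x hx => hLd x (lt_of_lt_of_le hε.1 (huIcc ▸ hx).1))
      (fun x hx => hM x (hεIcc (huIcc ▸ hx)))
      hu' hv'
    have hL1 : L 1 = 0 := by simp [hL]
    rw [hL1, zero_mul, zero_sub] at hibp
    have hint1 : IntervalIntegrable (fun x : ℝ => ((x:ℂ))⁻¹ * M x) volume ε 1 := by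
      refine hu'.mul_continuousOn ?_
      rw [huIcc]; exact hMcont.mono hεIcc
    have hint2 : IntervalIntegrable (fun x : ℝ => L x * ((x:ℂ) - a)⁻¹) volume ε 1 := by
      apply ContinuousOn.intervalIntegrable
      rw [huIcc]
      refine ContinuousOn.mul ?_ ?_
      · intro x hx
        exact (Complex.continuous_ofReal.continuousAt.comp
          (Real.continuousAt_log (lt_of_lt_of_le hε.1 hx.1).ne')).continuousWithinAt
      · refine ((Complex.continuous_ofReal.continuousOn.sub continuousOn_const).inv₀ ?_)
        intro x hx; exact sub_ne_zero.2 (hne x (hεIcc hx))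
    rw [intervalIntegral.integral_add hint1 hint2] at hibp
    have hGg : ∫ x in ε..1, G x = ∫ x in ε..1, ((x:ℂ))⁻¹ * M x := by
      apply intervalIntegral.integral_congr
      intro x hx
      rw [huIcc] at hx
      have hx0 : x ≠ 0 := (lt_of_lt_of_le hε.1 hx.1).ne'
      simp only [hG, hx0, if_false, hMdef]
      rw [div_eq_mul_inv]; ring
    have hfg : ∫ x in ε..1, f x = ∫ x in ε..1, L x * ((x:ℂ) - a)⁻¹ := by
      apply intervalIntegral.integral_congr
      intro x hx
      simp [hf, hL, div_eq_mul_inv]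
    rw [hfg, hGg]
    linear_combination hibp
  -- limits
  have tendA : Tendsto (fun ε => ∫ x in ε..1, f x) (𝓝[Ioo (0:ℝ) 1] 0)
      (𝓝 (∫ x in (0:ℝ)..1, f x)) := by
    have := intervalIntegral.continuousOn_primitive_interval_left (f := f) (μ := volume)
      (a := 0) (b := 1) (by
        have h1 : IntegrableOn f (Set.Ioc (0:ℝ) 1) volume := by
          rw [intervalIntegrable_iff, Set.uIoc_of_le (by norm_num : (0:ℝ) ≤ 1)] at hf_int
          exact hf_int
        have h0 : IntegrableOn f ({0} : Set ℝ) volume :=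
          (integrableOn_singleton_iff enorm_ne_top).mpr (Or.inr (by
            rw [Real.volume_singleton]; exact ENNReal.zero_lt_top))
        rw [Set.uIcc_of_le (by norm_num : (0:ℝ) ≤ 1)]
        refine (h0.union h1).mono_set ?_
        intro x hx
        rcases eq_or_ne x 0 with rfl | h
        · exact Or.inl rfl
        · exact Or.inr ⟨lt_of_le_of_ne hx.1 (Ne.symm h), hx.2⟩)
    have hcw := this 0 (by rw [Set.uIcc_of_le (by norm_num : (0:ℝ) ≤ 1)]; exact ⟨le_refl _, zero_le_one⟩)
    rw [Set.uIcc_of_le (by norm_num : (0:ℝ) ≤ 1)] at hcw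
    exact (hcw.tendsto).mono_left (nhdsWithin_mono _ hIooIcc)
  have tendG : Tendsto (fun ε => ∫ x in ε..1, G x) (𝓝[Ioo (0:ℝ) 1] 0)
      (𝓝 (∫ x in (0:ℝ)..1, G x)) := by
    have := intervalIntegral.continuousOn_primitive_interval_left (f := G) (μ := volume)
      (a := 0) (b := 1) hG_int
    have hcw := this 0 (by rw [Set.uIcc_of_le (by norm_num : (0:ℝ) ≤ 1)]; exact ⟨le_refl _, zero_le_one⟩)
    rw [Set.uIcc_of_le (by norm_num : (0:ℝ) ≤ 1)] at hcw
    exact (hcw.tendsto).mono_left (nhdsWithin_mono _ hIooIcc)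
  have tendB : Tendsto (fun ε => L ε * M ε) (𝓝[Ioo (0:ℝ) 1] 0) (𝓝 0) := by
    have h1 : Tendsto (fun ε : ℝ => Real.log ε * ε) (𝓝[Ioo (0:ℝ) 1] 0) (𝓝 0) := by
      have := tendsto_log_mul_rpow_nhdsGT_zero (r := 1) one_pos
      simp only [Real.rpow_one] at this
      exact this.mono_left (nhdsWithin_mono _ (fun x hx => hx.1))
    have h1' : Tendsto (fun ε : ℝ => ((Real.log ε * ε : ℝ) : ℂ)) (𝓝[Ioo (0:ℝ) 1] 0) (𝓝 0) := by
      have h2 := (Complex.continuous_ofReal.tendsto 0).comp h1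
      simpa only [Complex.ofReal_zero, Function.comp_def] using h2
    have h2 : Tendsto (fun ε => slope M 0 ε) (𝓝[Ioo (0:ℝ) 1] 0) (𝓝 (-a⁻¹)) :=
      hslope_tendsto.mono_left (nhdsWithin_mono _ (fun x hx => hx.1.ne'))
    have := h1'.mul h2
    rw [zero_mul] at this
    refine this.congr' ?_
    filter_upwards [eventually_mem_nhdsWithin] with ε hε
    rw [hslope ε hε.1.ne']
    simp only [hL]
    push_cast
    have hε0 : (ε : ℂ) ≠ 0 := by exact_mod_cast hε.1.ne'
    field_simp
  -- combine
  have tendRHS : Tendsto (fun ε => -(L ε * M ε) - ∫ x in ε..1, G x)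
      (𝓝[Ioo (0:ℝ) 1] 0) (𝓝 (-(0:ℂ) - ∫ x in (0:ℝ)..1, G x)) :=
    (tendB.neg).sub tendG
  have heq : ∫ x in (0:ℝ)..1, f x = -(0:ℂ) - ∫ x in (0:ℝ)..1, G x := by
    refine tendsto_nhds_unique (tendA.congr' ?_) tendRHS
    filter_upwards [eventually_mem_nhdsWithin] with ε hε
    exact key ε hε
  have hGg0 : ∫ x in (0:ℝ)..1, G x = ∫ x in (0:ℝ)..1, g x := by
    apply intervalIntegral.integral_congr_ae
    filter_upwards with x hx
    rw [Set.uIoc_of_le (by norm_num : (0:ℝ) ≤ 1)] at hx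
    simp [hG, hg, hx.1.ne']
  rw [heq, hGg0]
  rw [dilogC]
  simp only [neg_zero, zero_sub]
  congr 1
  apply intervalIntegral.integral_congr
  intro x hx
  simp only [hg, one_div]
  congr 2
  ring
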